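/- In every arrangement of three circles {C1, C2, C3}, if one of the circles separates the two intersection points of the other two, then each of the three circles separates the two intersection points of the other two. Consequently, every arrangement of three circles is either Krupp or NonKrupp. -/

import Mathlib

noncomputable section

/-- The Euclidean plane. -/
abbrev E2 := EuclideanSpace ℝ (Fin 2)

/-- The circle with center `c` and radius `r` separates the points `p` and `q`
(not lying on it) if exactly one of them lies in its open disk. -/
def Separates (c : E2) (r : ℝ) (p q : E2) : Prop :=
  Xor' (p ∈ Metric.ball c r) (q ∈ Metric.ball c r)

/-- The circle with center `c`, radius `r` separates the two intersection points of the
circle with center `c₁`, radius `r₁` and the circle with center `c₂`, radius `r₂`. -/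
def SepInt (c : E2) (r : ℝ) (c₁ : E2) (r₁ : ℝ) (c₂ : E2) (r₂ : ℝ) : Prop :=
  ∀ p q : E2, p ≠ q → Metric.sphere c₁ r₁ ∩ Metric.sphere c₂ r₂ = {p, q} →
    Separates c r p q

/-- The circle with center `c`, radius `r` does not separate the two intersection points of
the other two circles. -/
def NonSepInt (c : E2) (r : ℝ) (c₁ : E2) (r₁ : ℝ) (c₂ : E2) (r₂ : ℝ) : Prop :=
  ∀ p q : E2, p ≠ q → Metric.sphere c₁ r₁ ∩ Metric.sphere c₂ r₂ = {p, q} →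
    ¬ Separates c r p q

open scoped RealInnerProductSpace

/-- The power of the point `x` with respect to the circle with center `c`, radius `r`. -/
def Pw (c : E2) (r : ℝ) (x : E2) : ℝ := ⟪x - c, x - c⟫ - r ^ 2

lemma Pw_norm (c : E2) (r : ℝ) (x : E2) : Pw c r x = ‖x - c‖ ^ 2 - r ^ 2 := by
  rw [Pw, real_inner_self_eq_norm_sq]

lemma sphere_iff {c : E2} {r : ℝ} (hr : 0 ≤ r) {x : E2} :
    x ∈ Metric.sphere c r ↔ Pw c r x = 0 := by
  rw [Metric.mem_sphere, dist_eq_norm, Pw_norm, sub_eq_zero]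
  constructor
  · intro h; rw [h]
  · intro h; exact sq_eq_sq₀ (norm_nonneg _) hr |>.mp h

lemma ball_iff {c : E2} {r : ℝ} (hr : 0 ≤ r) {x : E2} :
    x ∈ Metric.ball c r ↔ Pw c r x < 0 := by
  rw [Metric.mem_ball, dist_eq_norm, Pw_norm, sub_neg]
  constructor
  · intro h; exact pow_lt_pow_left₀ h (norm_nonneg _) two_ne_zero
  · intro h
    by_contra hc
    push_neg at hc
    exact absurd (pow_le_pow_left₀ hr hc 2) (not_le.mpr h)

lemma inner2 (x y : E2) : ⟪x, y⟫ = x 0 * y 0 + x 1 * y 1 := by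
  simp [PiLp.inner_apply, RCLike.inner_apply, Fin.sum_univ_two]; ring

lemma Pw_coord (c : E2) (r : ℝ) (x : E2) :
    Pw c r x = (x 0 - c 0) ^ 2 + (x 1 - c 1) ^ 2 - r ^ 2 := by
  rw [Pw, inner2]; simp; ring

/-- The difference of two powers is an affine function. -/
lemma affdiff (c c' : E2) (r r' : ℝ) (x y : E2) :
    (Pw c r x - Pw c' r' x) - (Pw c r y - Pw c' r' y) = 2 * ⟪c' - c, x - y⟫ := by
  simp only [Pw_coord, inner2, PiLp.sub_apply]
  ring

lemma ne0_coord {u : E2} (hu : u ≠ 0) : u 0 ≠ 0 ∨ u 1 ≠ 0 := by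
  by_contra h
  push_neg at h
  apply hu
  ext i
  fin_cases i
  · exact h.1
  · exact h.2

lemma det0 {u v : E2} (h : u 0 * v 1 - u 1 * v 0 = 0) (hu : u ≠ 0) :
    ∃ t : ℝ, v = t • u := by
  rcases ne0_coord hu with h0 | h1
  · refine ⟨v 0 / u 0, ?_⟩
    ext i
    fin_cases i <;> simp only [PiLp.smul_apply, smul_eq_mul, Fin.zero_eta, Fin.mk_one]
    · field_simp
    · field_simp; linear_combination h
  · refine ⟨v 1 / u 1, ?_⟩
    ext i
    fin_cases i <;> simp only [PiLp.smul_apply, smul_eq_mul, Fin.zero_eta, Fin.mk_one]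
    · field_simp; linear_combination -h
    · field_simp

/-- In the plane, two vectors orthogonal to the same nonzero vector are parallel. -/
lemma perp2 {w u v : E2} (hw : w ≠ 0) (hu : ⟪w, u⟫ = 0) (hv : ⟪w, v⟫ = 0)
    (hune : u ≠ 0) : ∃ t : ℝ, v = t • u := by
  rw [inner2] at hu hv
  apply det0 _ hune
  rcases ne0_coord hw with h0 | h1
  · have : (u 0 * v 1 - u 1 * v 0) * w 0 = 0 := by linear_combination v 1 * hu - u 1 * hv
    exact (mul_eq_zero.mp this).resolve_right h0
  · have : (u 0 * v 1 - u 1 * v 0) * w 1 = 0 := by linear_combination -v 0 * hu + u 0 * hv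
    exact (mul_eq_zero.mp this).resolve_right h1

/-- Power-of-a-point identity along a chord. -/
lemma keyB {c p q z : E2} {r : ℝ} (w : E2) (hp : Pw c r p = 0) (hq : Pw c r q = 0)
    {t : ℝ} (hz : z = p + t • (q - p)) :
    (2 * ⟪w, z - p⟫) * (2 * ⟪w, z - q⟫) * ⟪q - p, q - p⟫
      = 4 * Pw c r z * ⟪w, q - p⟫ ^ 2 := by
  subst hz
  rw [Pw_coord] at hp hq
  simp only [Pw_coord, inner2, PiLp.sub_apply, PiLp.add_apply, PiLp.smul_apply, smul_eq_mul]
  set X := w 0 * (q 0 - p 0) + w 1 * (q 1 - p 1) with hX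
  linear_combination (4 * X ^ 2 * (t - 1)) * hp - (4 * X ^ 2 * t) * hq

/-- The main lemma: the sign of the power of the radical center controls separation. -/
lemma side {c ca cb z : E2} {r ra rb : ℝ}
    (hr : 0 ≤ r) (hra : 0 ≤ ra) (hrb : 0 ≤ rb)
    (hne : ca ≠ cb)
    (hzab : Pw ca ra z = Pw cb rb z)
    (hzc : Pw ca ra z = Pw c r z)
    (hC : ∀ x, x ∈ Metric.sphere ca ra → x ∈ Metric.sphere cb rb →
      x ∉ Metric.sphere c r)
    {p q : E2} (hpq : p ≠ q)
    (hset : Metric.sphere ca ra ∩ Metric.sphere cb rb = {p, q}) :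
    (Pw ca ra z < 0 → Separates c r p q) ∧ (0 < Pw ca ra z → ¬ Separates c r p q) := by
  have hpmem : p ∈ Metric.sphere ca ra ∩ Metric.sphere cb rb := by
    rw [hset]; exact Set.mem_insert _ _
  have hqmem : q ∈ Metric.sphere ca ra ∩ Metric.sphere cb rb := by
    rw [hset]; exact Set.mem_insert_of_mem _ rfl
  have hpa : Pw ca ra p = 0 := (sphere_iff hra).mp hpmem.1
  have hpb : Pw cb rb p = 0 := (sphere_iff hrb).mp hpmem.2
  have hqa : Pw ca ra q = 0 := (sphere_iff hra).mp hqmem.1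
  have hqb : Pw cb rb q = 0 := (sphere_iff hrb).mp hqmem.2
  have hap : Pw c r p ≠ 0 := fun h0 =>
    hC p hpmem.1 hpmem.2 ((sphere_iff hr).mpr h0)
  have haq : Pw c r q ≠ 0 := fun h0 =>
    hC q hqmem.1 hqmem.2 ((sphere_iff hr).mpr h0)
  -- collinearity of p, q, z
  have i1 : ⟪cb - ca, p - z⟫ = 0 := by
    have := affdiff ca cb ra rb p z
    rw [hpa, hpb, hzab] at this
    linarith
  have i2 : ⟪cb - ca, q - z⟫ = 0 := by
    have := affdiff ca cb ra rb q z
    rw [hqa, hqb, hzab] at this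
    linarith
  have hwne : cb - ca ≠ 0 := sub_ne_zero.mpr hne.symm
  have hpz : p - z ≠ 0 := by
    intro h
    have hz' : p = z := sub_eq_zero.mp h
    apply hap
    calc Pw c r p = Pw c r z := by rw [hz']
      _ = Pw ca ra z := hzc.symm
      _ = Pw ca ra p := by rw [hz']
      _ = 0 := hpa
  obtain ⟨t, ht⟩ := perp2 hwne i1 i2 hpz
  -- convert to z = p + s • (q - p)
  have ht1 : (1 : ℝ) - t ≠ 0 := by
    intro h
    have h1 : t = 1 := by linarith
    rw [h1, one_smul] at ht
    apply hpq
    have h2 : q - z - (p - z) = 0 := by rw [ht]; abel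
    have h3 : q - p = 0 := by rw [← h2]; abel
    have := sub_eq_zero.mp h3
    exact this.symm ▸ rfl
  have hqp : q - p = (1 - t) • (z - p) := by
    have h4 : q - p = (q - z) + (z - p) := by abel
    rw [h4, ht, sub_smul, one_smul]
    module
  have hzform : z = p + (1 - t)⁻¹ • (q - p) := by
    rw [hqp, smul_smul, inv_mul_cancel₀ ht1, one_smul]
    abel
  -- the key identity
  have ha : Pw c r p = 2 * ⟪ca - c, p - z⟫ := by
    have := affdiff c ca r ra p z
    rw [hpa, hzc] at this
    linarith
  have hb : Pw c r q = 2 * ⟪ca - c, q - z⟫ := by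
    have := affdiff c ca r ra q z
    rw [hqa, hzc] at this
    linarith
  have key := keyB (c := ca) (r := ra) (ca - c) hpa hqa hzform
  have hflip : ∀ x : E2, ⟪ca - c, z - x⟫ = - ⟪ca - c, x - z⟫ := by
    intro x
    rw [← inner_neg_right, neg_sub]
  rw [hflip p, hflip q] at key
  have key2 : Pw c r p * Pw c r q * ⟪q - p, q - p⟫
      = 4 * Pw ca ra z * ⟪ca - c, q - p⟫ ^ 2 := by
    rw [ha, hb]
    linear_combination key
  have hV : 0 < ⟪q - p, q - p⟫ :=
    lt_of_le_of_ne real_inner_self_nonneg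
      (fun h => (sub_ne_zero.mpr hpq.symm) (inner_self_eq_zero.mp h.symm))
  constructor
  · -- separation when power negative
    intro hneg
    have hX : ⟪ca - c, q - p⟫ ≠ 0 := by
      intro h
      have h0 : Pw c r p * Pw c r q * ⟪q - p, q - p⟫ = 0 := by
        rw [key2, h]; ring
      rcases mul_eq_zero.mp h0 with h' | h'
      · rcases mul_eq_zero.mp h' with h'' | h''
        · exact hap h''
        · exact haq h''
      · exact (ne_of_gt hV) h'
    have hprod : Pw c r p * Pw c r q < 0 := by
      have hX2 : 0 < ⟪ca - c, q - p⟫ ^ 2 := by positivity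
      nlinarith
    rw [Separates, ball_iff hr, ball_iff hr]
    rcases mul_neg_iff.mp hprod with ⟨h1, h2⟩ | ⟨h1, h2⟩
    · exact Or.inr ⟨h2, by linarith⟩
    · exact Or.inl ⟨h1, by linarith⟩
  · -- no separation when power positive
    intro hpos
    have hprod : 0 < Pw c r p * Pw c r q := by
      rcases eq_or_ne (⟪ca - c, q - p⟫) 0 with h | h
      · have heq : Pw c r p = Pw c r q := by
          rw [ha, hb]
          have h5 : ⟪ca - c, p - z⟫ - ⟪ca - c, q - z⟫ = ⟪ca - c, p - q⟫ := by
            rw [← inner_sub_right]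
            congr 1
            abel
          have h6 : ⟪ca - c, p - q⟫ = 0 := by
            rw [show p - q = -(q - p) by abel, inner_neg_right, h, neg_zero]
          have h7 : ⟪ca - c, p - z⟫ = ⟪ca - c, q - z⟫ := by linarith
          rw [h7]
        rw [heq]
        exact mul_self_pos.mpr haq
      · have hX2 : 0 < ⟪ca - c, q - p⟫ ^ 2 := by positivity
        nlinarith
    rw [Separates, ball_iff hr, ball_iff hr]
    rcases mul_pos_iff.mp hprod with ⟨h1, h2⟩ | ⟨h1, h2⟩
    · rintro (⟨ha', hb'⟩ | ⟨ha', hb'⟩) <;> linarith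
    · rintro (⟨ha', hb'⟩ | ⟨ha', hb'⟩) <;> linarith

/-- Two circles meeting in exactly two points have distinct centers. -/
lemma centers_ne {c c' : E2} {r r' : ℝ} (hr : 0 < r) {p q : E2} (hpq : p ≠ q)
    (hset : Metric.sphere c r ∩ Metric.sphere c' r' = {p, q}) : c ≠ c' := by
  intro hcc
  subst hcc
  have hp : p ∈ Metric.sphere c r ∩ Metric.sphere c r' := by
    rw [hset]; exact Set.mem_insert _ _
  have hrr : r = r' := by
    have hd1 : dist p c = r := hp.1
    have hd2 : dist p c = r' := hp.2
    rw [← hd1, hd2]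
  subst hrr
  rw [Set.inter_self] at hset
  set e0 : E2 := EuclideanSpace.single 0 (1:ℝ) with he0
  set e1 : E2 := EuclideanSpace.single 1 (1:ℝ) with he1
  have hmem : ∀ v : E2, ‖v‖ = r → c + v ∈ Metric.sphere c r := by
    intro v hv
    rw [Metric.mem_sphere, dist_eq_norm, add_sub_cancel_left, hv]
  have hn0 : ‖r • e0‖ = r := by
    rw [norm_smul, he0, EuclideanSpace.norm_single]
    simp [abs_of_pos hr]
  have hn1 : ‖r • e1‖ = r := by
    rw [norm_smul, he1, EuclideanSpace.norm_single]
    simp [abs_of_pos hr]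
  have hn0' : ‖(-r) • e0‖ = r := by
    rw [norm_smul, he0, EuclideanSpace.norm_single]
    simp [abs_of_pos hr]
  have m1 := hmem _ hn0
  have m2 := hmem _ hn1
  have m3 := hmem _ hn0'
  rw [hset] at m1 m2 m3
  have c01 : (c + r • e0) 0 = c 0 + r := by
    simp [he0, EuclideanSpace.single_apply]
  have c02 : (c + r • e1) 0 = c 0 := by
    simp [he1, EuclideanSpace.single_apply]
  have c03 : (c + (-r) • e0) 0 = c 0 - r := by
    simp [he0, EuclideanSpace.single_apply]; ring
  have d12 : c + r • e0 ≠ c + r • e1 := by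
    intro h; rw [h] at c01; rw [c02] at c01; linarith
  have d13 : c + r • e0 ≠ c + (-r) • e0 := by
    intro h; rw [h] at c01; rw [c03] at c01; linarith
  have d23 : c + r • e1 ≠ c + (-r) • e0 := by
    intro h; rw [h] at c02; rw [c03] at c02; linarith
  rcases m1 with h1 | h1 <;> rcases m2 with h2 | h2 <;> rcases m3 with h3 | h3 <;>
    simp only [Set.mem_singleton_iff] at * <;> first
    | exact d12 (h1.trans h2.symm)
    | exact d13 (h1.trans h3.symm)
    | exact d23 (h2.trans h3.symm)

/-- When the three centers are collinear there is never separation. -/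
lemma sideP {c ca cb : E2} {r ra rb : ℝ}
    (hr : 0 ≤ r) (hra : 0 ≤ ra) (hrb : 0 ≤ rb)
    (hpar : ∃ s : ℝ, c - ca = s • (cb - ca)) :
    NonSepInt c r ca ra cb rb := by
  intro p q hpq hset
  obtain ⟨s, hs⟩ := hpar
  have hpmem : p ∈ Metric.sphere ca ra ∩ Metric.sphere cb rb := by
    rw [hset]; exact Set.mem_insert _ _
  have hqmem : q ∈ Metric.sphere ca ra ∩ Metric.sphere cb rb := by
    rw [hset]; exact Set.mem_insert_of_mem _ rfl
  have hpa : Pw ca ra p = 0 := (sphere_iff hra).mp hpmem.1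
  have hpb : Pw cb rb p = 0 := (sphere_iff hrb).mp hpmem.2
  have hqa : Pw ca ra q = 0 := (sphere_iff hra).mp hqmem.1
  have hqb : Pw cb rb q = 0 := (sphere_iff hrb).mp hqmem.2
  have i0 : ⟪cb - ca, p - q⟫ = 0 := by
    have := affdiff ca cb ra rb p q
    rw [hpa, hpb, hqa, hqb] at this
    linarith
  have heq : Pw c r p = Pw c r q := by
    have h1 := affdiff c ca r ra p q
    rw [hpa, hqa] at h1
    have h2 : ⟪ca - c, p - q⟫ = 0 := by
      have h3 : ca - c = (-s) • (cb - ca) := by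
        rw [neg_smul, ← hs]; abel
      rw [h3, real_inner_smul_left, i0, mul_zero]
    rw [h2] at h1
    linarith
  rw [Separates, ball_iff hr, ball_iff hr, heq]
  rintro (⟨h1, h2⟩ | ⟨h1, h2⟩) <;> exact h2 h1

/-- The radical center exists when the centers are not collinear. -/
lemma radical (c1 c2 c3 : E2) (r1 r2 r3 : ℝ)
    (hD : (c2 0 - c1 0) * (c3 1 - c1 1) - (c2 1 - c1 1) * (c3 0 - c1 0) ≠ 0) :
    ∃ z : E2, Pw c1 r1 z = Pw c2 r2 z ∧ Pw c1 r1 z = Pw c3 r3 z := by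
  set A0 := c2 0 - c1 0 with hA0
  set A1 := c2 1 - c1 1 with hA1
  set B0 := c3 0 - c1 0 with hB0
  set B1 := c3 1 - c1 1 with hB1
  set D := A0 * B1 - A1 * B0 with hD'
  set k := (c2 0) ^ 2 + (c2 1) ^ 2 - (c1 0) ^ 2 - (c1 1) ^ 2 + r1 ^ 2 - r2 ^ 2 with hk
  set l := (c3 0) ^ 2 + (c3 1) ^ 2 - (c1 0) ^ 2 - (c1 1) ^ 2 + r1 ^ 2 - r3 ^ 2 with hl
  refine ⟨(WithLp.equiv 2 (Fin 2 → ℝ)).symm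
    ![(k * B1 - l * A1) / (2 * D), (l * A0 - k * B0) / (2 * D)], ?_, ?_⟩ <;>
  · rw [Pw_coord, Pw_coord]
    simp only [WithLp.equiv_symm_apply, PiLp.toLp_apply, Matrix.cons_val_zero, Matrix.cons_val_one,
      Matrix.head_cons]
    field_simp
    ring

/-- In every arrangement of three circles, if one of the circles separates the two
intersection points of the other two, then each of the three circles separates the two
intersection points of the other two.  Consequently, every arrangement of three circles
is either Krupp or NonKrupp. -/
theorem stmt0 (c₁ c₂ c₃ : E2) (r₁ r₂ r₃ : ℝ)
    (hr₁ : 0 < r₁) (hr₂ : 0 < r₂) (hr₃ : 0 < r₃)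
    (h12 : ∃ p q : E2, p ≠ q ∧ Metric.sphere c₁ r₁ ∩ Metric.sphere c₂ r₂ = {p, q})
    (h13 : ∃ p q : E2, p ≠ q ∧ Metric.sphere c₁ r₁ ∩ Metric.sphere c₃ r₃ = {p, q})
    (h23 : ∃ p q : E2, p ≠ q ∧ Metric.sphere c₂ r₂ ∩ Metric.sphere c₃ r₃ = {p, q})
    (hno3 : ∀ x : E2, ¬ (x ∈ Metric.sphere c₁ r₁ ∧ x ∈ Metric.sphere c₂ r₂ ∧
      x ∈ Metric.sphere c₃ r₃)) :
    ((SepInt c₃ r₃ c₁ r₁ c₂ r₂ ∨ SepInt c₂ r₂ c₁ r₁ c₃ r₃ ∨ SepInt c₁ r₁ c₂ r₂ c₃ r₃) →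
      (SepInt c₃ r₃ c₁ r₁ c₂ r₂ ∧ SepInt c₂ r₂ c₁ r₁ c₃ r₃ ∧ SepInt c₁ r₁ c₂ r₂ c₃ r₃)) ∧
    ((SepInt c₃ r₃ c₁ r₁ c₂ r₂ ∧ SepInt c₂ r₂ c₁ r₁ c₃ r₃ ∧ SepInt c₁ r₁ c₂ r₂ c₃ r₃) ∨
      (NonSepInt c₃ r₃ c₁ r₁ c₂ r₂ ∧ NonSepInt c₂ r₂ c₁ r₁ c₃ r₃ ∧
        NonSepInt c₁ r₁ c₂ r₂ c₃ r₃)) := by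
  obtain ⟨p12, q12, hpq12, hset12⟩ := h12
  obtain ⟨p13, q13, hpq13, hset13⟩ := h13
  obtain ⟨p23, q23, hpq23, hset23⟩ := h23
  have hr1 : (0:ℝ) ≤ r₁ := hr₁.le
  have hr2 : (0:ℝ) ≤ r₂ := hr₂.le
  have hr3 : (0:ℝ) ≤ r₃ := hr₃.le
  have hc12 : c₁ ≠ c₂ := centers_ne hr₁ hpq12 hset12
  have hc13 : c₁ ≠ c₃ := centers_ne hr₁ hpq13 hset13
  have hc23 : c₂ ≠ c₃ := centers_ne hr₂ hpq23 hset23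
  rcases eq_or_ne ((c₂ 0 - c₁ 0) * (c₃ 1 - c₁ 1) - (c₂ 1 - c₁ 1) * (c₃ 0 - c₁ 0)) 0
    with hD | hD
  · -- collinear centers: no circle separates
    have hu : c₂ - c₁ ≠ 0 := sub_ne_zero.mpr hc12.symm
    have hdet : (c₂ - c₁) 0 * (c₃ - c₁) 1 - (c₂ - c₁) 1 * (c₃ - c₁) 0 = 0 := by
      simp only [PiLp.sub_apply]; exact hD
    obtain ⟨s, hs⟩ := det0 hdet hu
    have hs0 : s ≠ 0 := by
      intro h
      rw [h, zero_smul] at hs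
      exact (sub_ne_zero.mpr hc13.symm) hs
    have hs1 : s ≠ 1 := by
      intro h
      rw [h, one_smul] at hs
      apply hc23
      have h' : c₂ - c₁ - (c₃ - c₁) = 0 := by rw [hs]; abel
      have h'' : c₂ - c₃ = 0 := by rw [← h']; abel
      exact (sub_eq_zero.mp h'').symm ▸ rfl
    have NS3 : NonSepInt c₃ r₃ c₁ r₁ c₂ r₂ :=
      sideP hr3 hr1 hr2 ⟨s, hs⟩
    have NS2 : NonSepInt c₂ r₂ c₁ r₁ c₃ r₃ := by
      apply sideP hr2 hr1 hr3
      refine ⟨s⁻¹, ?_⟩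
      rw [hs, smul_smul, inv_mul_cancel₀ hs0, one_smul]
    have NS1 : NonSepInt c₁ r₁ c₂ r₂ c₃ r₃ := by
      apply sideP hr1 hr2 hr3
      have hcc : c₃ - c₂ = (s - 1) • (c₂ - c₁) := by
        rw [show c₃ - c₂ = (c₃ - c₁) - (c₂ - c₁) from by abel, hs]
        module
      refine ⟨-(s - 1)⁻¹, ?_⟩
      rw [hcc, smul_smul, neg_mul, inv_mul_cancel₀ (sub_ne_zero.mpr hs1), neg_one_smul]
      abel
    refine ⟨?_, Or.inr ⟨NS3, NS2, NS1⟩⟩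
    rintro (hS | hS | hS)
    · exact absurd (hS p12 q12 hpq12 hset12) (NS3 p12 q12 hpq12 hset12)
    · exact absurd (hS p13 q13 hpq13 hset13) (NS2 p13 q13 hpq13 hset13)
    · exact absurd (hS p23 q23 hpq23 hset23) (NS1 p23 q23 hpq23 hset23)
  · -- non-collinear centers: radical center exists
    obtain ⟨z, h12z, h13z⟩ := radical c₁ c₂ c₃ r₁ r₂ r₃ hD
    have h23z : Pw c₂ r₂ z = Pw c₃ r₃ z := by rw [← h12z, h13z]
    have hz0 : Pw c₁ r₁ z ≠ 0 := by
      intro h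
      exact hno3 z ⟨(sphere_iff hr1).mpr h,
        (sphere_iff hr2).mpr (by rw [← h12z]; exact h),
        (sphere_iff hr3).mpr (by rw [← h13z]; exact h)⟩
    have hC3 : ∀ x, x ∈ Metric.sphere c₁ r₁ → x ∈ Metric.sphere c₂ r₂ →
        x ∉ Metric.sphere c₃ r₃ := fun x h1 h2 h3 => hno3 x ⟨h1, h2, h3⟩
    have hC2 : ∀ x, x ∈ Metric.sphere c₁ r₁ → x ∈ Metric.sphere c₃ r₃ →
        x ∉ Metric.sphere c₂ r₂ := fun x h1 h2 h3 => hno3 x ⟨h1, h3, h2⟩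
    have hC1 : ∀ x, x ∈ Metric.sphere c₂ r₂ → x ∈ Metric.sphere c₃ r₃ →
        x ∉ Metric.sphere c₁ r₁ := fun x h1 h2 h3 => hno3 x ⟨h3, h1, h2⟩
    rcases lt_trichotomy (Pw c₁ r₁ z) 0 with hneg | hzero | hpos
    · have A3 : SepInt c₃ r₃ c₁ r₁ c₂ r₂ := fun p q hpq hset =>
        (side hr3 hr1 hr2 hc12 h12z h13z hC3 hpq hset).1 hneg
      have A2 : SepInt c₂ r₂ c₁ r₁ c₃ r₃ := fun p q hpq hset =>
        (side hr2 hr1 hr3 hc13 h13z h12z hC2 hpq hset).1 hneg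
      have A1 : SepInt c₁ r₁ c₂ r₂ c₃ r₃ := fun p q hpq hset =>
        (side hr1 hr2 hr3 hc23 h23z h12z.symm hC1 hpq hset).1 (h12z ▸ hneg)
      exact ⟨fun _ => ⟨A3, A2, A1⟩, Or.inl ⟨A3, A2, A1⟩⟩
    · exact absurd hzero hz0
    · have N3 : NonSepInt c₃ r₃ c₁ r₁ c₂ r₂ := fun p q hpq hset =>
        (side hr3 hr1 hr2 hc12 h12z h13z hC3 hpq hset).2 hpos
      have N2 : NonSepInt c₂ r₂ c₁ r₁ c₃ r₃ := fun p q hpq hset =>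
        (side hr2 hr1 hr3 hc13 h13z h12z hC2 hpq hset).2 hpos
      have N1 : NonSepInt c₁ r₁ c₂ r₂ c₃ r₃ := fun p q hpq hset =>
        (side hr1 hr2 hr3 hc23 h23z h12z.symm hC1 hpq hset).2 (h12z ▸ hpos)
      refine ⟨?_, Or.inr ⟨N3, N2, N1⟩⟩
      rintro (hS | hS | hS)
      · exact absurd (hS p12 q12 hpq12 hset12) (N3 p12 q12 hpq12 hset12)
      · exact absurd (hS p13 q13 hpq13 hset13) (N2 p13 q13 hpq13 hset13)
      · exact absurd (hS p23 q23 hpq23 hset23) (N1 p23 q23 hpq23 hset23)
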